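/- Let μ be a finite nonnegative measure on ℝⁿ, 0 < α < n, s > 1, and ρ ∈ (0,5]. If s > 2, then the integral I₁ = ∫_{B_ρ(x)} (∫_{|z−x|<2ρ} |z−y|^{α−n} dμ(z))^{1/(s−1)} dy satisfies I₁ ≤ c·μ(B_{2ρ}(x))^{1/(s−1)}·ρ^{n+(α−n)/(s−1)} with c = c(n,α,s), via Hölder's inequality with exponents s−1 and (s−1)/(s−2) followed by Fubini's theorem. -/

import Mathlib

open MeasureTheory Set ENNReal Filter

lemma riesz_annuli_cover {z y : EuclideanSpace ℝ (Fin n)} {R : ℝ} (hR : 0 < R)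
    (hy : y ∈ Metric.ball z R) (hyz : y ≠ z) :
    ∃ k : ℕ, y ∈ Metric.ball z (R * (2:ℝ)⁻¹ ^ k) \ Metric.ball z (R * (2:ℝ)⁻¹ ^ (k+1)) := by
  set t : ℝ := dist y z with ht
  have ht0 : 0 < t := dist_pos.2 hyz
  have htR : t < R := hy
  have hu1 : t / R < 1 := (div_lt_one hR).2 htR
  have hu0 : 0 < t / R := div_pos ht0 hR
  have hex : ∃ k : ℕ, (2:ℝ)⁻¹ ^ k ≤ t / R := by
    obtain ⟨k, hk⟩ := exists_pow_lt_of_lt_one hu0 (by norm_num : (2:ℝ)⁻¹ < 1)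
    exact ⟨k, hk.le⟩
  classical
  set m := Nat.find hex with hm
  have hmle : (2:ℝ)⁻¹ ^ m ≤ t / R := Nat.find_spec hex
  have hm0 : m ≠ 0 := by
    intro h
    have := hmle
    rw [h, pow_zero] at this
    exact absurd (this.trans_lt hu1) (lt_irrefl _)
  obtain ⟨k, hk⟩ := Nat.exists_eq_succ_of_ne_zero hm0
  refine ⟨k, ?_, ?_⟩
  · have hlt : t / R < (2:ℝ)⁻¹ ^ k := by
      by_contra h
      push_neg at h
      exact Nat.find_min hex (by omega : k < m) h
    have : t < R * (2:ℝ)⁻¹ ^ k := by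
      rw [div_lt_iff₀ hR] at hlt
      linarith [hlt]
    simpa [Metric.mem_ball] using this
  · intro h
    have h2 : t < R * (2:ℝ)⁻¹ ^ (k+1) := by simpa [Metric.mem_ball] using h
    have : (2:ℝ)⁻¹ ^ m ≤ t / R := hmle
    rw [hk, Nat.succ_eq_add_one] at this
    have := (le_div_iff₀ hR).1 this
    linarith [this, h2]

lemma riesz_inner_ball_bound (n : ℕ) (α : ℝ) (hα : 0 < α) (hαn : α < n)
    (z : EuclideanSpace ℝ (Fin n)) (R : ℝ) (hR : 0 < R) :
    ∫⁻ y in Metric.ball z R, ENNReal.ofReal (‖z - y‖ ^ (α - n)) ≤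
      (ENNReal.ofReal ((2:ℝ) ^ ((n:ℝ) - α)) *
        volume (Metric.ball (0 : EuclideanSpace ℝ (Fin n)) 1) *
        (1 - ENNReal.ofReal ((2:ℝ)⁻¹ ^ α))⁻¹) * ENNReal.ofReal (R ^ α) := by
  have hn : 0 < n := by exact_mod_cast hα.trans hαn
  haveI : Nontrivial (EuclideanSpace ℝ (Fin n)) :=
    Module.nontrivial_of_finrank_pos (R := ℝ)
      (by rw [finrank_euclideanSpace_fin]; exact hn)
  set V := volume (Metric.ball (0 : EuclideanSpace ℝ (Fin n)) 1) with hV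
  set q := ENNReal.ofReal ((2:ℝ)⁻¹ ^ α) with hq
  set A : ℕ → Set (EuclideanSpace ℝ (Fin n)) := fun k =>
    Metric.ball z (R * (2:ℝ)⁻¹ ^ k) \ Metric.ball z (R * (2:ℝ)⁻¹ ^ (k+1)) with hA
  have hterm : ∀ k : ℕ, ∫⁻ y in A k, ENNReal.ofReal (‖z - y‖ ^ (α - n)) ≤
      (ENNReal.ofReal ((2:ℝ) ^ ((n:ℝ) - α)) * V * q ^ k) * ENNReal.ofReal (R ^ α) := by
    intro k
    have hb : (0:ℝ) < R * (2:ℝ)⁻¹ ^ k := by positivity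
    have hb1 : (0:ℝ) < R * (2:ℝ)⁻¹ ^ (k+1) := by positivity
    have hkey : (R * (2:ℝ)⁻¹ ^ (k+1)) ^ (α - (n:ℝ)) * (R * (2:ℝ)⁻¹ ^ k) ^ (n:ℕ)
        = (2:ℝ) ^ ((n:ℝ) - α) * ((2:ℝ)⁻¹ ^ α) ^ k * R ^ α := by
      have e1 : R * (2:ℝ)⁻¹ ^ (k+1) = (R * (2:ℝ)⁻¹ ^ k) * 2⁻¹ := by ring
      have h2 : ((2:ℝ)⁻¹) ^ (α - (n:ℝ)) = (2:ℝ) ^ ((n:ℝ) - α) := by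
        rw [Real.inv_rpow (by norm_num : (0:ℝ) ≤ 2), ← Real.rpow_neg (by norm_num), neg_sub]
      have h3 : (R * (2:ℝ)⁻¹ ^ k) ^ α = R ^ α * ((2:ℝ)⁻¹ ^ α) ^ k := by
        rw [Real.mul_rpow hR.le (by positivity), ← Real.rpow_natCast ((2:ℝ)⁻¹) k,
          ← Real.rpow_mul (by norm_num), mul_comm (k:ℝ) α,
          Real.rpow_mul (by norm_num), Real.rpow_natCast]
      rw [e1, Real.mul_rpow hb.le (by norm_num), ← Real.rpow_natCast (R * (2:ℝ)⁻¹ ^ k) n,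
        mul_right_comm, ← Real.rpow_add hb, sub_add_cancel, h2, h3]
      ring
    have hbound : ∀ y ∈ A k, ENNReal.ofReal (‖z - y‖ ^ (α - n)) ≤
        ENNReal.ofReal ((R * (2:ℝ)⁻¹ ^ (k+1)) ^ (α - (n:ℝ))) := by
      intro y hy
      apply ENNReal.ofReal_le_ofReal
      have hdist : R * (2:ℝ)⁻¹ ^ (k+1) ≤ ‖z - y‖ := by
        have := hy.2
        simp only [Metric.mem_ball, not_lt] at this
        rw [← dist_eq_norm]
        simpa [dist_comm] using this
      exact Real.rpow_le_rpow_of_nonpos hb1 hdist (by linarith)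
    calc ∫⁻ y in A k, ENNReal.ofReal (‖z - y‖ ^ (α - n))
        ≤ ∫⁻ _ in A k, ENNReal.ofReal ((R * (2:ℝ)⁻¹ ^ (k+1)) ^ (α - (n:ℝ))) :=
          setLIntegral_mono measurable_const hbound
      _ = ENNReal.ofReal ((R * (2:ℝ)⁻¹ ^ (k+1)) ^ (α - (n:ℝ))) * volume (A k) :=
          setLIntegral_const _ _
      _ ≤ ENNReal.ofReal ((R * (2:ℝ)⁻¹ ^ (k+1)) ^ (α - (n:ℝ))) *
            volume (Metric.ball z (R * (2:ℝ)⁻¹ ^ k)) :=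
          mul_le_mul_right (measure_mono diff_subset) _
      _ = ENNReal.ofReal ((R * (2:ℝ)⁻¹ ^ (k+1)) ^ (α - (n:ℝ))) *
            (ENNReal.ofReal ((R * (2:ℝ)⁻¹ ^ k) ^ (n:ℕ)) * V) := by
          rw [Measure.addHaar_ball volume z hb.le, finrank_euclideanSpace_fin]
      _ = (ENNReal.ofReal ((2:ℝ) ^ ((n:ℝ) - α)) * V * q ^ k) * ENNReal.ofReal (R ^ α) := by
          rw [← mul_assoc, ← ENNReal.ofReal_mul (Real.rpow_nonneg hb1.le _), hkey,
            ENNReal.ofReal_mul (by positivity), ENNReal.ofReal_mul (by positivity),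
            hq, ← ENNReal.ofReal_pow (by positivity)]
          ring
  have hsub : Metric.ball z R \ {z} ⊆ ⋃ k, A k := by
    intro y hy
    obtain ⟨k, hk⟩ := riesz_annuli_cover hR hy.1 (by simpa using hy.2)
    exact mem_iUnion.2 ⟨k, hk⟩
  have hae : (Metric.ball z R \ ({z} : Set (EuclideanSpace ℝ (Fin n)))) =ᵐ[volume] Metric.ball z R :=
    diff_ae_eq_self.2 (measure_mono_null inter_subset_right (measure_singleton z))
  calc ∫⁻ y in Metric.ball z R, ENNReal.ofReal (‖z - y‖ ^ (α - n))
      = ∫⁻ y in Metric.ball z R \ {z}, ENNReal.ofReal (‖z - y‖ ^ (α - n)) :=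
        (setLIntegral_congr hae).symm
    _ ≤ ∫⁻ y in ⋃ k, A k, ENNReal.ofReal (‖z - y‖ ^ (α - n)) := lintegral_mono_set hsub
    _ ≤ ∑' k, ∫⁻ y in A k, ENNReal.ofReal (‖z - y‖ ^ (α - n)) := lintegral_iUnion_le _ _
    _ ≤ ∑' k, (ENNReal.ofReal ((2:ℝ) ^ ((n:ℝ) - α)) * V * q ^ k) * ENNReal.ofReal (R ^ α) :=
        ENNReal.tsum_le_tsum hterm
    _ = (ENNReal.ofReal ((2:ℝ) ^ ((n:ℝ) - α)) * V * (1 - q)⁻¹) * ENNReal.ofReal (R ^ α) := by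
        rw [ENNReal.tsum_mul_right, ENNReal.tsum_mul_left, ENNReal.tsum_geometric]

/-- For `s > 2`, `0 < α < n`, there is `c = c(n,α,s)` such that for every finite nonnegative
measure `μ`, every `x` and every `ρ ∈ (0,5]`,
`I₁ = ∫_{B_ρ(x)} (∫_{|z−x|<2ρ} |z−y|^{α−n} dμ(z))^{1/(s−1)} dy
   ≤ c·μ(B_{2ρ}(x))^{1/(s−1)}·ρ^{n+(α−n)/(s−1)}`. -/
theorem riesz_potential_ball_estimate_s_gt_two (n : ℕ) (α s : ℝ)
    (hα : 0 < α) (hαn : α < n) (hs : 2 < s) :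
    ∃ c : ℝ≥0∞, 0 < c ∧ c ≠ ⊤ ∧
      ∀ (μ : Measure (EuclideanSpace ℝ (Fin n))), IsFiniteMeasure μ →
        ∀ (x : EuclideanSpace ℝ (Fin n)) (ρ : ℝ), 0 < ρ → ρ ≤ 5 →
          (∫⁻ y in Metric.ball x ρ,
              (∫⁻ z in Metric.ball x (2*ρ),
                  ENNReal.ofReal (‖z - y‖ ^ (α - n)) ∂μ) ^ (1/(s-1)))
            ≤ c * (μ (Metric.ball x (2*ρ))) ^ (1/(s-1)) *
                ENNReal.ofReal (ρ ^ ((n:ℝ) + (α - n)/(s-1))) := by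
  have hs1 : (1:ℝ) < s - 1 := by linarith
  have hs10 : (0:ℝ) < s - 1 := by linarith
  set θ : ℝ := 1/(s-1) with hθ
  have hθ0 : 0 < θ := by positivity
  have hθ1 : θ < 1 := by rw [hθ, div_lt_one hs10]; linarith
  have hn : 0 < n := by exact_mod_cast hα.trans hαn
  haveI : Nontrivial (EuclideanSpace ℝ (Fin n)) :=
    Module.nontrivial_of_finrank_pos (R := ℝ)
      (by rw [finrank_euclideanSpace_fin]; exact hn)
  set V := volume (Metric.ball (0 : EuclideanSpace ℝ (Fin n)) 1) with hV
  have hV0 : 0 < V := Metric.measure_ball_pos _ _ one_pos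
  have hVt : V ≠ ⊤ := measure_ball_lt_top.ne
  set C := ENNReal.ofReal ((2:ℝ) ^ ((n:ℝ) - α)) * V *
      (1 - ENNReal.ofReal ((2:ℝ)⁻¹ ^ α))⁻¹ with hC
  have hq1 : ENNReal.ofReal ((2:ℝ)⁻¹ ^ α) < 1 := by
    rw [ENNReal.ofReal_lt_one]
    exact Real.rpow_lt_one (by norm_num) (by norm_num) hα
  have hC0 : 0 < C := by
    refine ENNReal.mul_pos (ENNReal.mul_pos ?_ ?_).ne' ?_
    · exact (ENNReal.ofReal_pos.2 (Real.rpow_pos_of_pos (by norm_num) _)).ne'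
    · exact hV0.ne'
    · exact (ENNReal.inv_pos.2 (tsub_le_self.trans_lt one_lt_top).ne).ne'
  have hCt : C ≠ ⊤ := by
    apply ENNReal.mul_ne_top (ENNReal.mul_ne_top ENNReal.ofReal_ne_top hVt)
    rw [ENNReal.inv_ne_top]
    exact (tsub_pos_of_lt hq1).ne'
  refine ⟨C ^ θ * ENNReal.ofReal ((3:ℝ) ^ (α*θ)) * V ^ (1-θ), ?_, ?_, ?_⟩
  · refine ENNReal.mul_pos (ENNReal.mul_pos ?_ ?_).ne' ?_
    · exact (ENNReal.rpow_pos hC0 hCt).ne'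
    · exact (ENNReal.ofReal_pos.2 (Real.rpow_pos_of_pos (by norm_num) _)).ne'
    · exact (ENNReal.rpow_pos hV0 hVt).ne'
  · exact ENNReal.mul_ne_top (ENNReal.mul_ne_top
      (ENNReal.rpow_ne_top_of_nonneg hθ0.le hCt) ENNReal.ofReal_ne_top)
      (ENNReal.rpow_ne_top_of_nonneg (by linarith) hVt)
  intro μ hμ x ρ hρ hρ5
  set F : EuclideanSpace ℝ (Fin n) → ℝ≥0∞ := fun y =>
    ∫⁻ z in Metric.ball x (2*ρ), ENNReal.ofReal (‖z - y‖ ^ (α - n)) ∂μ with hFdef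
  have hk : Measurable (fun p : EuclideanSpace ℝ (Fin n) × EuclideanSpace ℝ (Fin n) =>
      ENNReal.ofReal (‖p.2 - p.1‖ ^ (α - (n:ℝ)))) :=
    ENNReal.measurable_ofReal.comp
      (((measurable_snd.sub measurable_fst).norm).pow measurable_const)
  have hF : Measurable F := Measurable.lintegral_prod_right hk
  -- Step B : Fubini + inner estimate
  have hswap : ∫⁻ y in Metric.ball x ρ, F y =
      ∫⁻ z in Metric.ball x (2*ρ), (∫⁻ y in Metric.ball x ρ,
        ENNReal.ofReal (‖z - y‖ ^ (α - (n:ℝ)))) ∂μ :=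
    lintegral_lintegral_swap hk.aemeasurable
  have hstepB : ∫⁻ y in Metric.ball x ρ, F y ≤
      C * ENNReal.ofReal ((3*ρ) ^ α) * μ (Metric.ball x (2*ρ)) := by
    rw [hswap]
    have hmono : ∀ z ∈ Metric.ball x (2*ρ),
        (∫⁻ y in Metric.ball x ρ, ENNReal.ofReal (‖z - y‖ ^ (α - (n:ℝ)))) ≤
          C * ENNReal.ofReal ((3*ρ) ^ α) := by
      intro z hz
      refine le_trans (lintegral_mono_set ?_) (riesz_inner_ball_bound n α hα hαn z _ (by linarith))
      intro y hy
      have h1 : dist y x < ρ := hy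
      have h2 : dist z x < 2*ρ := hz
      have : dist y z < 3*ρ := by
        calc dist y z ≤ dist y x + dist x z := dist_triangle _ _ _
          _ < 3*ρ := by rw [dist_comm x z]; linarith
      exact this
    calc (∫⁻ z in Metric.ball x (2*ρ), (∫⁻ y in Metric.ball x ρ,
            ENNReal.ofReal (‖z - y‖ ^ (α - (n:ℝ)))) ∂μ)
        ≤ ∫⁻ _ in Metric.ball x (2*ρ), C * ENNReal.ofReal ((3*ρ) ^ α) ∂μ :=
          setLIntegral_mono measurable_const hmono
      _ = C * ENNReal.ofReal ((3*ρ) ^ α) * μ (Metric.ball x (2*ρ)) := setLIntegral_const _ _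
  -- Step A : Hölder
  have hpq : (s-1).HolderConjugate ((s-1)/(s-2)) := by
    rw [Real.holderConjugate_iff_eq_conjExponent hs1]
    congr 1
    ring
  have holder := ENNReal.lintegral_mul_le_Lp_mul_Lq (volume.restrict (Metric.ball x ρ)) hpq
    (f := fun y => (F y) ^ θ) (g := 1)
    ((hF.pow measurable_const).aemeasurable) aemeasurable_const
  simp only [Pi.mul_apply, Pi.one_apply, mul_one, ENNReal.one_rpow] at holder
  have hpow : ∀ y, ((F y) ^ θ) ^ (s-1) = F y := by
    intro y
    rw [← ENNReal.rpow_mul, hθ, one_div, inv_mul_cancel₀ (by linarith), ENNReal.rpow_one]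
  simp only [hpow, lintegral_one, Measure.restrict_apply MeasurableSet.univ,
    univ_inter] at holder
  have hstepA : (∫⁻ y in Metric.ball x ρ, (F y) ^ θ) ≤
      (∫⁻ y in Metric.ball x ρ, F y) ^ θ * (volume (Metric.ball x ρ)) ^ (1-θ) := by
    have he : 1/((s-1)/(s-2)) = 1 - θ := by
      rw [one_div_div, hθ, eq_sub_iff_add_eq, ← add_div]
      have h21 : s - 2 + 1 = s - 1 := by ring
      rw [h21, div_self (by linarith)]
    rw [he, ← hθ] at holder
    exact holder
  -- combine
  calc (∫⁻ y in Metric.ball x ρ, (F y) ^ θ)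
      ≤ (∫⁻ y in Metric.ball x ρ, F y) ^ θ * (volume (Metric.ball x ρ)) ^ (1-θ) := hstepA
    _ ≤ (C * ENNReal.ofReal ((3*ρ) ^ α) * μ (Metric.ball x (2*ρ))) ^ θ *
          (ENNReal.ofReal (ρ ^ (n:ℕ)) * V) ^ (1-θ) := by
        refine mul_le_mul' (ENNReal.rpow_le_rpow hstepB hθ0.le) (le_of_eq ?_)
        rw [Measure.addHaar_ball volume x hρ.le, finrank_euclideanSpace_fin]
    _ = C ^ θ * ENNReal.ofReal ((3:ℝ) ^ (α*θ)) * (μ (Metric.ball x (2*ρ))) ^ θ *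
          ENNReal.ofReal (ρ ^ ((n:ℝ) + (α - n)/(s-1))) * V ^ (1-θ) := by
        have h3ρ : (0:ℝ) < 3*ρ := by linarith
        rw [ENNReal.mul_rpow_of_nonneg _ _ hθ0.le, ENNReal.mul_rpow_of_nonneg _ _ hθ0.le,
          ENNReal.mul_rpow_of_nonneg _ _ (by linarith : (0:ℝ) ≤ 1-θ)]
        rw [ENNReal.ofReal_rpow_of_pos (Real.rpow_pos_of_pos h3ρ _)]
        rw [← Real.rpow_natCast ρ n, ENNReal.ofReal_rpow_of_pos (Real.rpow_pos_of_pos hρ _)]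
        rw [← Real.rpow_mul h3ρ.le, Real.mul_rpow (by norm_num) hρ.le,
          ← Real.rpow_mul hρ.le]
        rw [ENNReal.ofReal_mul (by positivity)]
        have hexp : (ρ:ℝ) ^ (α*θ) * ρ ^ ((n:ℝ)*(1-θ)) = ρ ^ ((n:ℝ) + (α - n)/(s-1)) := by
          rw [← Real.rpow_add hρ]
          congr 1
          rw [hθ]
          field_simp
          ring
        rw [← hexp, ENNReal.ofReal_mul (by positivity)]
        ring
    _ = C ^ θ * ENNReal.ofReal ((3:ℝ) ^ (α*θ)) * V ^ (1-θ) *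
          (μ (Metric.ball x (2*ρ))) ^ θ *
          ENNReal.ofReal (ρ ^ ((n:ℝ) + (α - n)/(s-1))) := by ring
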